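/- With notation as in the desingularization: for every t ∈ [0,1], the tuple (o₁, o₂, z̄₁(C,t), …, z̄_n(C,t)) with z̄_j(C,t) = x_j + t·j·ε̄(C)·e_C belongs to F(ℝ^d, n+2); i.e. shifting the j-th robot by t·j·ε̄(C) along e_C never creates a collision among the robots or with the obstacles. -/

import Mathlib

open scoped RealInnerProductSpace

noncomputable section

variable {d n : ℕ}

/-- The unit vector `e_C = (o₂ − o₁)/‖o₂ − o₁‖` of a configuration with obstacles
`o₁ = C 0`, `o₂ = C 1`. -/
def eDir (C : Fin (n + 2) → EuclideanSpace ℝ (Fin d)) : EuclideanSpace ℝ (Fin d) :=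
  ‖C 1 - C 0‖⁻¹ • (C 1 - C 0)

/-- The orthogonal projection `p_C` onto the line `L_C` through `o₁ = C 0` and
`o₂ = C 1`: `p_C(x) = o₁ + ⟨x − o₁, e_C⟩ e_C`. -/
def projL (C : Fin (n + 2) → EuclideanSpace ℝ (Fin d))
    (x : EuclideanSpace ℝ (Fin d)) : EuclideanSpace ℝ (Fin d) :=
  C 0 + ⟪x - C 0, eDir C⟫ • eDir C

open Classical in
/-- `c̄p(C)`: the number of distinct projections of the `n+2` points of `C`
onto the line `L_C`. -/
def cp (C : Fin (n + 2) → EuclideanSpace ℝ (Fin d)) : ℕ :=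
  (Finset.univ.image fun i : Fin (n + 2) => projL C (C i)).card

/-- `ε̄(C) = (1/(n+2)) · min{ ‖p_C(y_r) − p_C(y_s)‖ : p_C(y_r) ≠ p_C(y_s) }`,
the minimum running over all pairs of entries of `C` (obstacles included). -/
def epsBar (C : Fin (n + 2) → EuclideanSpace ℝ (Fin d)) : ℝ :=
  (1 / (n + 2 : ℝ)) *
    sInf {r : ℝ | ∃ i j : Fin (n + 2),
      projL C (C i) ≠ projL C (C j) ∧ r = ‖projL C (C i) - projL C (C j)‖}

/-- The desingularization at time `t`: the obstacles `C 0, C 1` stay put and the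
`j`-th robot `x_j = C (j+1)` is shifted by `t·j·ε̄(C)` along `e_C`. -/
def desing (C : Fin (n + 2) → EuclideanSpace ℝ (Fin d)) (t : ℝ) :
    Fin (n + 2) → EuclideanSpace ℝ (Fin d) :=
  fun i => C i + (if 2 ≤ (i : ℕ) then t * ((i : ℕ) - 1 : ℕ) * epsBar C else 0) • eDir C

end

/-- For every `t ∈ [0,1]` the desingularized tuple
`(o₁, o₂, z̄₁(C,t), …, z̄_n(C,t))` (with `z̄_j(C,t) = x_j + t·j·ε̄(C)·e_C`)
still lies in `F(ℝ^d, n+2)`: no collisions are created. -/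
theorem desing_injective (d n : ℕ)
    (C : Fin (n + 2) → EuclideanSpace ℝ (Fin d))
    (hC : Function.Injective C) :
    ∀ t ∈ Set.Icc (0 : ℝ) 1, Function.Injective (desing C t) := by
  intro t ht i j hij
  have h01 : C 1 - C 0 ≠ 0 := sub_ne_zero.mpr fun h => by
    have := hC h
    simp [Fin.ext_iff] at this
  have henz : eDir C ≠ 0 := by
    simp only [eDir, ne_eq, smul_eq_zero, inv_eq_zero, norm_eq_zero]
    tauto
  have hnorm : ‖eDir C‖ = 1 := by
    rw [eDir, norm_smul, norm_inv, norm_norm,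
      inv_mul_cancel₀ (norm_ne_zero_iff.mpr h01)]
  set s : Fin (n + 2) → ℝ :=
    fun k => if 2 ≤ (k : ℕ) then t * ((k : ℕ) - 1 : ℕ) * epsBar C else 0 with hs
  have h : C i + s i • eDir C = C j + s j • eDir C := hij
  have key : C i - C j = (s j - s i) • eDir C := by
    rw [sub_smul, sub_eq_sub_iff_add_eq_add]
    exact h.trans (add_comm _ _)
  rcases eq_or_ne (s j - s i) 0 with hc | hc
  · exact hC (sub_eq_zero.mp (by rw [key, hc, zero_smul]))
  exfalso
  have hinner : ⟪C i - C j, eDir C⟫ = s j - s i := by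
    rw [key, real_inner_smul_left, real_inner_self_eq_norm_mul_norm, hnorm]
    ring
  have hproj : projL C (C i) - projL C (C j) = (s j - s i) • eDir C := by
    simp only [projL, add_sub_add_left_eq_sub, ← sub_smul, ← inner_sub_left,
      sub_sub_sub_cancel_right, hinner]
  have hprojne : projL C (C i) ≠ projL C (C j) := by
    intro hcontra
    rw [sub_eq_zero.mpr hcontra] at hproj
    exact hc (by simpa [henz] using hproj.symm)
  set S : Set ℝ := {r : ℝ | ∃ i j : Fin (n + 2),
      projL C (C i) ≠ projL C (C j) ∧ r = ‖projL C (C i) - projL C (C j)‖} with hS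
  have hSfin : S.Finite := by
    apply Set.Finite.subset (Set.finite_range
      (fun p : Fin (n + 2) × Fin (n + 2) => ‖projL C (C p.1) - projL C (C p.2)‖))
    rintro r ⟨a, b, -, rfl⟩
    exact ⟨(a, b), rfl⟩
  have hSne : S.Nonempty := ⟨_, i, j, hprojne, rfl⟩
  have hmem : sInf S ∈ S := hSne.csInf_mem hSfin
  have hInfpos : 0 < sInf S := by
    obtain ⟨a, b, hab, hr⟩ := hmem
    rw [hr]
    exact norm_pos_iff.mpr (sub_ne_zero.mpr hab)
  have hεpos : 0 < epsBar C := by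
    rw [epsBar]
    exact mul_pos (by positivity) hInfpos
  have hInfle : sInf S ≤ ‖projL C (C i) - projL C (C j)‖ :=
    csInf_le hSfin.bddBelow ⟨i, j, hprojne, rfl⟩
  have hval : ‖projL C (C i) - projL C (C j)‖ = |s j - s i| := by
    rw [hproj, norm_smul, hnorm, mul_one, Real.norm_eq_abs]
  have hsb : ∀ k : Fin (n + 2), 0 ≤ s k ∧ s k ≤ (n : ℝ) * epsBar C := by
    intro k
    simp only [hs]
    split
    · constructor
      · exact mul_nonneg (mul_nonneg ht.1 (Nat.cast_nonneg _)) hεpos.le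
      · have hk : (((k : ℕ) - 1 : ℕ) : ℝ) ≤ (n : ℝ) := by
          have : (k : ℕ) - 1 ≤ n := by omega
          exact_mod_cast this
        calc t * (((k : ℕ) - 1 : ℕ) : ℝ) * epsBar C
            ≤ 1 * (n : ℝ) * epsBar C := by
              apply mul_le_mul (mul_le_mul ht.2 hk (Nat.cast_nonneg _) (by linarith [ht.1, ht.2])) le_rfl hεpos.le
              positivity
          _ = (n : ℝ) * epsBar C := by ring
    · exact ⟨le_rfl, mul_nonneg (Nat.cast_nonneg _) hεpos.le⟩
  have habs : |s j - s i| ≤ (n : ℝ) * epsBar C := by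
    rw [abs_sub_le_iff]
    constructor <;> [linarith [(hsb j).1, (hsb j).2, (hsb i).1, (hsb i).2];
      linarith [(hsb j).1, (hsb j).2, (hsb i).1, (hsb i).2]]
  have hInfval : sInf S = ((n : ℝ) + 2) * epsBar C := by
    rw [epsBar]
    field_simp
    rfl
  nlinarith [hInfle, hval, habs, hεpos, hInfval]
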